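/- The number of closed walks of length g+2 in G that are not cycles, whose traversed-edge subgraph contains a cycle of length g, and whose base vertex does not lie on that cycle, equals g·N_g·(c+d−4). -/

import Mathlib

open SimpleGraph Walk

section Aux

variable {V : Type*} [DecidableEq V] {G : SimpleGraph V}

/-- In a non-nil walk, every support vertex lies on some edge. -/
lemma aux_exists_edge_of_mem_support {a b z : V} (p : G.Walk a b) (hp : ¬ p.Nil)
    (hz : z ∈ p.support) : ∃ e ∈ p.edges, z ∈ e := by
  induction p with
  | nil => exact absurd Walk.Nil.nil hp
  | @cons u v w h q ih =>
    rw [Walk.support_cons, List.mem_cons] at hz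
    rcases hz with rfl | hz
    · exact ⟨s(z, v), by simp, by simp⟩
    · by_cases hq : q.Nil
      · have hzv : z = v := by
          rw [Walk.nil_iff_support_eq] at hq
          simpa [hq] using hz
        subst hzv
        exact ⟨s(u, z), by simp, by simp⟩
      · obtain ⟨e, he, hze⟩ := ih hq hz
        exact ⟨e, by simp [he], hze⟩

/-- A vertex lying on an edge of a walk lies in the support. -/
lemma aux_mem_support_of_mem_edges {a b z : V} (p : G.Walk a b) {e : Sym2 V}
    (he : e ∈ p.edges) (hz : z ∈ e) : z ∈ p.support := by
  obtain ⟨w, rfl⟩ := Sym2.mem_iff_exists.mp hz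
  exact p.fst_mem_support_of_mem_edges he

/-- For a non-nil walk, the endpoint is in the tail of the support. -/
lemma aux_end_mem_support_tail {a b : V} (p : G.Walk a b) (hp : ¬ p.Nil) :
    b ∈ p.support.tail := by
  cases p with
  | nil => exact absurd Walk.Nil.nil hp
  | cons h q => simpa using q.end_mem_support

/-- A closed path is nil. -/
lemma aux_isPath_closed_eq_nil {a : V} (p : G.Walk a a) (hp : p.IsPath) : p = Walk.nil := by
  cases p with
  | nil => rfl
  | cons h q =>
    exfalso
    have := hp.support_nodup
    rw [Walk.support_cons] at this
    exact (List.nodup_cons.mp this).1 q.end_mem_support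

/-- Parity of the number of edges of a walk containing a given vertex. -/
lemma aux_parity {a b : V} (p : G.Walk a b) (z : V) :
    Even (p.edges.countP (fun e => decide (z ∈ e))) ↔ (z = a ↔ z = b) := by
  induction p with
  | nil => simp
  | @cons u v w h q ih =>
    rw [Walk.edges_cons, List.countP_cons]
    have huv : u ≠ v := h.ne
    by_cases hzu : z = u
    · subst hzu
      by_cases hzw : z = w
      · simp [Sym2.mem_iff, Nat.even_add_one, ih, h.ne, iff_true_intro hzw]
      · simp [Sym2.mem_iff, Nat.even_add_one, ih, h.ne, hzw]
    · by_cases hzv : z = v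
      · subst hzv
        by_cases hzw : z = w
        · simp [Sym2.mem_iff, Nat.even_add_one, ih, hzu, Ne.symm hzu, iff_true_intro hzw]
        · simp [Sym2.mem_iff, Nat.even_add_one, ih, hzu, Ne.symm hzu, hzw]
      · by_cases hzw : z = w
        · simp [Sym2.mem_iff, ih, hzu, hzv, iff_true_intro hzw]
        · simp [Sym2.mem_iff, ih, hzu, hzv, hzw]

/-- girth lower bound for cycles -/
lemma aux_girth_le {a : V} {w : G.Walk a a} (hw : w.IsCycle) : G.girth ≤ w.length := by
  have h1 : G.egirth ≤ (w.length : ℕ∞) := by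
    rw [SimpleGraph.egirth]
    exact le_trans (iInf_le _ a) (le_trans (iInf_le _ w) (iInf_le _ hw))
  have h2 := ENat.toNat_le_toNat h1 (by simp : (w.length : ℕ∞) ≠ ⊤)
  simpa [SimpleGraph.girth] using h2

/-- shifting a cycle one step: cons form to concat form -/
lemma aux_shift_isCycle {x y : V} (h : G.Adj x y) (r : G.Walk y x)
    (hc : (Walk.cons h r).IsCycle) : (r.concat h).IsCycle := by
  rw [Walk.isCycle_def] at hc ⊢
  obtain ⟨ht, -, hnd⟩ := hc
  rw [Walk.isTrail_def] at ht ⊢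
  rw [Walk.edges_cons, List.nodup_cons] at ht
  rw [Walk.support_cons, List.tail_cons] at hnd
  refine ⟨?_, ?_, ?_⟩
  · rw [Walk.edges_concat, List.concat_eq_append, List.nodup_append']
    refine ⟨ht.2, List.nodup_singleton _, ?_⟩
    intro t ht1 ht2
    rw [List.mem_singleton] at ht2
    subst ht2
    exact ht.1 ht1
  · exact r.concat_ne_nil h
  · rw [Walk.support_concat]
    have hr : r.support = y :: r.support.tail := by
      cases r <;> simp
    rw [hr, List.cons_append, List.tail_cons]
    rw [List.nodup_append']
    have := hr ▸ hnd
    rw [List.nodup_cons] at this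
    exact ⟨this.2, List.nodup_singleton _, by
      intro t ht1 ht2
      rw [List.mem_singleton] at ht2
      subst ht2
      exact this.1 ht1⟩

/-- Decompose a cycle as first edge, middle walk, last edge. -/
lemma aux_cycle_decomp {x : V} (q : G.Walk x x) (hq : q.IsCycle) :
    ∃ (y z : V) (h₁ : G.Adj x y) (h₂ : G.Adj z x) (m : G.Walk y z),
      q = Walk.cons h₁ (m.concat h₂) ∧ m.length + 2 = q.length := by
  have h3 : 3 ≤ q.length := hq.three_le_length
  have hqn : ¬ q.Nil := by
    rw [Walk.nil_iff_length_eq]; omega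
  obtain ⟨y, h₁, r, rfl⟩ := Walk.not_nil_iff.mp hqn
  have hrn : ¬ r.reverse.Nil := by
    rw [Walk.nil_iff_length_eq, Walk.length_reverse]
    rw [Walk.length_cons] at h3; omega
  obtain ⟨z, h₂', m'', hr⟩ := Walk.not_nil_iff.mp hrn
  have hrr : r = m''.reverse.concat h₂'.symm := by
    have : r = (Walk.cons h₂' m'').reverse := by rw [← hr, Walk.reverse_reverse]
    rw [this, Walk.reverse_cons]
    rfl
  refine ⟨y, z, h₁, h₂'.symm, m''.reverse, by rw [hrr], ?_⟩
  have := congrArg Walk.length hrr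
  rw [Walk.length_concat, Walk.length_reverse] at this
  rw [Walk.length_cons, Walk.length_reverse]
  omega

/-- an edge of a path containing the start vertex is the first edge. -/
lemma aux_start_edge {a b : V} {p : G.Walk a b} (hp : p.IsPath) {e : Sym2 V}
    (he : e ∈ p.edges) (ha : a ∈ e) : ∃ (c : V) (h : G.Adj a c) (q : G.Walk c b),
      p = Walk.cons h q ∧ e = s(a, c) := by
  cases p with
  | nil => simp at he
  | @cons u v w h q =>
    rw [Walk.edges_cons, List.mem_cons] at he
    rcases he with rfl | he
    · exact ⟨v, h, q, rfl, rfl⟩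
    · exfalso
      have : a ∈ q.support := aux_mem_support_of_mem_edges q he ha
      exact (List.nodup_cons.mp (by simpa using hp.support_nodup)).1 this

end Aux

section Aux2

variable {V : Type*} [Fintype V] [DecidableEq V] {G : SimpleGraph V} [DecidableRel G.Adj]

/-- number of neighbors of the base of a cycle avoiding its support, when the
cycle has minimal length. -/
lemma aux_fiber_card {x : V} (q : G.Walk x x) (hq : q.IsCycle)
    (hmin : ∀ (a : V) (w : G.Walk a a), w.IsCycle → q.length ≤ w.length) :
    Nat.card {v : V // G.Adj v x ∧ v ∉ q.support} = G.degree x - 2 := by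
  obtain ⟨y, z, h₁, h₂, m, rfl, hlen⟩ := aux_cycle_decomp q hq
  set q := Walk.cons h₁ (m.concat h₂) with hqdef
  have h3 : 3 ≤ q.length := hq.three_le_length
  have hsupp : q.support = x :: (m.support ++ [x]) := by
    rw [hqdef, Walk.support_cons, Walk.support_concat]
  have hnd : (m.support ++ [x]).Nodup := by
    have := (Walk.isCycle_def _).mp hq
    have h4 := this.2.2
    rw [hsupp, List.tail_cons] at h4
    exact h4
  have hmnd : m.support.Nodup := (List.nodup_append'.mp hnd).1
  have hxm : x ∉ m.support := by
    intro hx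
    exact (List.nodup_append'.mp hnd).2.2 hx (List.mem_singleton_self x)
  have hmpath : m.IsPath := Walk.IsPath.mk' hmnd
  have hyz : y ≠ z := by
    intro hyz
    subst hyz
    have := aux_isPath_closed_eq_nil m hmpath
    rw [this] at hlen
    simp at hlen
    omega
  have hym : y ∈ q.support := by
    rw [hsupp]
    exact List.mem_cons_of_mem _ (List.mem_append_left _ m.start_mem_support)
  have hzm : z ∈ q.support := by
    rw [hsupp]
    exact List.mem_cons_of_mem _ (List.mem_append_left _ m.end_mem_support)
  have hset : {v : V | G.Adj v x ∧ v ∉ q.support} = ↑(G.neighborFinset x \ {y, z}) := by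
    ext v
    simp only [Set.mem_setOf_eq, Finset.coe_sdiff, Set.mem_diff, Finset.coe_insert,
      Set.mem_insert_iff, Finset.mem_coe, SimpleGraph.mem_neighborFinset, Finset.coe_singleton,
      Set.mem_singleton_iff]
    constructor
    · rintro ⟨hadj, hns⟩
      refine ⟨hadj.symm, ?_⟩
      rintro (rfl | rfl)
      · exact hns hym
      · exact hns hzm
    · rintro ⟨hadj, hvy⟩
      push_neg at hvy
      refine ⟨hadj.symm, ?_⟩
      intro hv
      -- chord argument
      have hvx : v ≠ x := fun h => (hadj.ne (h.symm)).elim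
      have hvm : v ∈ m.support := by
        rw [hsupp] at hv
        rcases List.mem_cons.mp hv with rfl | hv
        · exact absurd rfl hvx
        · rcases List.mem_append.mp hv with h | h
          · exact h
          · exact absurd (List.mem_singleton.mp h) hvx
      set t := m.takeUntil v hvm with htdef
      set dl := m.dropUntil v hvm with hddef
      have hspec : t.append dl = m := m.take_spec hvm
      have hdpath : dl.IsPath := hmpath.dropUntil hvm
      have hxd : x ∉ dl.support := fun hx => hxm (m.support_dropUntil_subset hvm hx)
      have hCpath : (dl.concat h₂).IsPath := by
        have h5 : (dl.concat h₂).reverse.IsPath := by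
          rw [Walk.reverse_concat]
          refine Walk.IsPath.cons hdpath.reverse ?_
          rwa [Walk.support_reverse, List.mem_reverse]
        have := h5.reverse
        rwa [Walk.reverse_reverse] at this
      have hCedge : s(x, v) ∉ (dl.concat h₂).edges := by
        rw [Walk.edges_concat, List.concat_eq_append]
        intro hmem
        rcases List.mem_append.mp hmem with h5 | h5
        · exact hxd (dl.fst_mem_support_of_mem_edges h5)
        · rw [List.mem_singleton, Sym2.eq_iff] at h5
          rcases h5 with ⟨rfl, rfl⟩ | ⟨-, rfl⟩
          · exact h₂.ne rfl
          · exact hvy.2 rfl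
      have hC : (Walk.cons hadj (dl.concat h₂)).IsCycle :=
        (Walk.cons_isCycle_iff _ hadj).mpr ⟨hCpath, hCedge⟩
      have hlenC := hmin x _ hC
      have hlm : t.length + dl.length = m.length := by
        have := congrArg Walk.length hspec
        rwa [Walk.length_append] at this
      have hClen : (Walk.cons hadj (dl.concat h₂)).length = dl.length + 2 := by
        rw [Walk.length_cons, Walk.length_concat]
      rw [hClen] at hlenC
      have hql : q.length = m.length + 2 := by
        rw [hqdef, Walk.length_cons, Walk.length_concat]
      rw [hql] at hlenC
      have htl : t.length = 0 := by omega
      have : y = v := Walk.Nil.eq (Walk.nil_iff_length_eq.mpr htl)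
      exact hvy.1 this.symm
  have hsub : ({y, z} : Finset V) ⊆ G.neighborFinset x := by
    intro w hw
    rcases Finset.mem_insert.mp hw with rfl | hw
    · exact (SimpleGraph.mem_neighborFinset _ _ _).mpr h₁
    · rw [Finset.mem_singleton] at hw
      subst hw
      exact (SimpleGraph.mem_neighborFinset _ _ _).mpr h₂.symm
  have hcard2 : ({y, z} : Finset V).card = 2 := by
    rw [Finset.card_insert_of_notMem (by simpa using hyz), Finset.card_singleton]
  calc Nat.card {v : V // G.Adj v x ∧ v ∉ q.support}
      = ({v : V | G.Adj v x ∧ v ∉ q.support} : Set V).ncard := Nat.card_coe_set_eq _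
    _ = (G.neighborFinset x \ {y, z} : Finset V).card := by rw [hset, Set.ncard_coe_finset]
    _ = G.degree x - 2 := by
        rw [Finset.card_sdiff_of_subset hsub, hcard2, SimpleGraph.card_neighborFinset_eq_degree]

end Aux2

/-- shift a closed walk by one step. -/
def myShift {V : Type*} {G : SimpleGraph V} : (Σ x : V, G.Walk x x) → (Σ x : V, G.Walk x x)
  | ⟨x, SimpleGraph.Walk.nil⟩ => ⟨x, SimpleGraph.Walk.nil⟩
  | ⟨_, @SimpleGraph.Walk.cons _ _ _ y _ h r⟩ => ⟨y, r.concat h⟩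

section Aux3

variable {V : Type*} [DecidableEq V] {G : SimpleGraph V}

lemma myShift_cons {x y : V} (h : G.Adj x y) (r : G.Walk y x) :
    myShift ⟨x, Walk.cons h r⟩ = ⟨y, r.concat h⟩ := rfl

lemma aux_shift_mem {p : Σ x : V, G.Walk x x} (hcy : p.2.IsCycle) :
    (myShift p).2.IsCycle ∧ (myShift p).2.length = p.2.length ∧ G.Adj p.1 (myShift p).1 := by
  obtain ⟨x, q⟩ := p
  dsimp only at hcy ⊢
  have hqn : ¬ q.Nil := by
    rw [Walk.nil_iff_length_eq]
    have := hcy.three_le_length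
    omega
  obtain ⟨y, h, r, rfl⟩ := Walk.not_nil_iff.mp hqn
  rw [myShift_cons]
  exact ⟨aux_shift_isCycle h r hcy, by simp, h⟩

lemma aux_shift_inj {p₁ p₂ : Σ x : V, G.Walk x x} (h₁ : ¬ p₁.2.Nil) (h₂ : ¬ p₂.2.Nil)
    (heq : myShift p₁ = myShift p₂) : p₁ = p₂ := by
  obtain ⟨x₁, q₁⟩ := p₁
  obtain ⟨x₂, q₂⟩ := p₂
  dsimp only at h₁ h₂ heq ⊢
  obtain ⟨y₁, e₁, r₁, rfl⟩ := Walk.not_nil_iff.mp h₁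
  obtain ⟨y₂, e₂, r₂, rfl⟩ := Walk.not_nil_iff.mp h₂
  rw [myShift_cons, myShift_cons] at heq
  obtain ⟨rfl, hw⟩ := Sigma.mk.inj_iff.mp heq
  have hw' : r₁.concat e₁ = r₂.concat e₂ := eq_of_heq hw
  have hrev := congrArg Walk.reverse hw'
  rw [Walk.reverse_concat, Walk.reverse_concat] at hrev
  rw [Walk.cons.injEq] at hrev
  have hx : x₁ = x₂ := hrev.1
  subst hx
  have hr := hrev.2
  have : r₁.reverse = r₂.reverse := eq_of_heq hr
  have : r₁ = r₂ := Walk.reverse_injective this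
  subst this
  rfl

end Aux3



section Aux4

variable {V : Type*} [DecidableEq V] {G : SimpleGraph V}

lemma aux_f_mem (g : ℕ) {x v : V} (q : G.Walk x x) (ha : G.Adj v x) (hc : q.IsCycle)
    (hl : q.length = g) (hs : v ∉ q.support) :
    (Walk.cons ha (q.concat ha.symm)).length = g + 2 ∧
    ¬ (Walk.cons ha (q.concat ha.symm)).IsCycle ∧
    ∃ (u : V) (q' : G.Walk u u), q'.IsCycle ∧ q'.length = g ∧
      (∀ e ∈ q'.edges, e ∈ (Walk.cons ha (q.concat ha.symm)).edges) ∧ v ∉ q'.support := by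
  refine ⟨by simp [hl], ?_, x, q, hc, hl, ?_, hs⟩
  · intro hC
    have hnd := ((Walk.isCycle_def _).mp hC).2.2
    rw [Walk.support_cons, List.tail_cons, Walk.support_concat] at hnd
    have hq : q.support.Nodup := (List.nodup_append'.mp hnd).1
    have hqn : ¬ q.Nil := by
      rw [Walk.nil_iff_length_eq]
      have := hc.three_le_length
      omega
    have hx : x ∈ q.support.tail := aux_end_mem_support_tail q hqn
    rw [q.support_eq_cons, List.nodup_cons] at hq
    exact hq.1 hx
  · intro e he
    rw [Walk.edges_cons, Walk.edges_concat, List.concat_eq_append]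
    exact List.mem_cons_of_mem _ (List.mem_append_left _ he)

lemma aux_f_inj {x₁ x₂ v : V} (q₁ : G.Walk x₁ x₁) (q₂ : G.Walk x₂ x₂)
    (a₁ : G.Adj v x₁) (a₂ : G.Adj v x₂)
    (h : (⟨v, Walk.cons a₁ (q₁.concat a₁.symm)⟩ : Σ v : V, G.Walk v v)
      = ⟨v, Walk.cons a₂ (q₂.concat a₂.symm)⟩) :
    x₁ = x₂ ∧ HEq q₁ q₂ := by
  have hw : Walk.cons a₁ (q₁.concat a₁.symm) = Walk.cons a₂ (q₂.concat a₂.symm) :=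
    eq_of_heq (Sigma.mk.inj_iff.mp h).2
  rw [Walk.cons.injEq] at hw
  have hx : x₁ = x₂ := hw.1
  subst hx
  have hcc : q₁.concat a₁.symm = q₂.concat a₂.symm := eq_of_heq hw.2
  have hrev := congrArg Walk.reverse hcc
  rw [Walk.reverse_concat, Walk.reverse_concat, Walk.cons.injEq] at hrev
  have h5 : q₁.reverse = q₂.reverse := eq_of_heq hrev.2
  exact ⟨rfl, heq_of_eq (Walk.reverse_injective h5)⟩

lemma aux_surj (g : ℕ) (hg3 : 3 ≤ g) {v : V} (w : G.Walk v v) (hlen : w.length = g + 2)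
    {u : V} (q : G.Walk u u) (hqc : q.IsCycle) (hql : q.length = g)
    (hsub : ∀ e ∈ q.edges, e ∈ w.edges) (hvq : v ∉ q.support) :
    ∃ (x : V) (ha : G.Adj v x) (m : G.Walk x x),
      m.IsCycle ∧ m.length = g ∧ v ∉ m.support ∧ w = Walk.cons ha (m.concat ha.symm) := by
  have hwn : ¬ w.Nil := by rw [Walk.nil_iff_length_eq]; omega
  obtain ⟨x, h₁, p, rfl⟩ := Walk.not_nil_iff.mp hwn
  have hpl : p.length = g + 1 := by rw [Walk.length_cons] at hlen; omega
  have hpn : ¬ p.reverse.Nil := by rw [Walk.nil_iff_length_eq, Walk.length_reverse]; omega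
  obtain ⟨y, h₂, m'', hr⟩ := Walk.not_nil_iff.mp hpn
  have hp : p = m''.reverse.concat h₂.symm := by
    have : p = (Walk.cons h₂ m'').reverse := by rw [← hr, Walk.reverse_reverse]
    rw [this, Walk.reverse_cons]
    rfl
  set m := m''.reverse with hm
  have hml : m.length = g := by
    have := congrArg Walk.length hp
    rw [Walk.length_concat] at this
    omega
  have hedges : (Walk.cons h₁ p).edges = s(v, x) :: (m.edges ++ [s(y, v)]) := by
    rw [Walk.edges_cons, hp, Walk.edges_concat, List.concat_eq_append]
  have hqsub : ∀ e ∈ q.edges, e ∈ m.edges := by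
    intro e he
    have hvnotin : ∀ z, z ∈ e → z ∈ q.support := fun z hz =>
      aux_mem_support_of_mem_edges q he hz
    have h5 := hsub e he
    rw [hedges, List.mem_cons] at h5
    rcases h5 with rfl | h5
    · exact absurd (hvnotin v (by simp)) hvq
    · rcases List.mem_append.mp h5 with h6 | h6
      · exact h6
      · rw [List.mem_singleton] at h6
        subst h6
        exact absurd (hvnotin v (by simp)) hvq
  have hperm : List.Perm q.edges m.edges := by
    have hsubp : List.Subperm q.edges m.edges :=
      List.subperm_of_subset hqc.isCircuit.isTrail.edges_nodup hqsub
    exact hsubp.perm_of_length_le (by rw [Walk.length_edges, Walk.length_edges, hml, hql])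
  have hxy : x = y := by
    have hq_even : Even (q.edges.countP (fun e => decide (x ∈ e))) :=
      (aux_parity q x).mpr Iff.rfl
    have hcount : m.edges.countP (fun e => decide (x ∈ e))
        = q.edges.countP (fun e => decide (x ∈ e)) := (hperm.countP_eq _).symm
    have h7 := (aux_parity m x).mp (by rw [hcount]; exact hq_even)
    simpa using h7
  subst hxy
  have hmn : ¬ m.Nil := by rw [Walk.nil_iff_length_eq]; omega
  have hqn : ¬ q.Nil := by
    rw [Walk.nil_iff_length_eq]
    omega
  have hsupp_mq : ∀ z ∈ m.support, z ∈ q.support := fun z hz => by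
    obtain ⟨e, he, hze⟩ := aux_exists_edge_of_mem_support m hmn hz
    exact aux_mem_support_of_mem_edges q (hperm.symm.subset he) hze
  have hsupp_qm : ∀ z ∈ q.support, z ∈ m.support := fun z hz => by
    obtain ⟨e, he, hze⟩ := aux_exists_edge_of_mem_support q hqn hz
    exact aux_mem_support_of_mem_edges m (hperm.subset he) hze
  have hvm : v ∉ m.support := fun h => hvq (hsupp_mq v h)
  have htail : q.support.tail ⊆ m.support.tail := by
    intro z hz
    have hzs : z ∈ m.support := hsupp_qm z (List.mem_of_mem_tail hz)
    rw [m.support_eq_cons, List.mem_cons] at hzs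
    rcases hzs with rfl | h
    · exact aux_end_mem_support_tail m hmn
    · exact h
  have hmtail_nodup : m.support.tail.Nodup := by
    have hsubp : List.Subperm q.support.tail m.support.tail :=
      List.subperm_of_subset hqc.support_nodup htail
    have hpermt : List.Perm q.support.tail m.support.tail := hsubp.perm_of_length_le (by
      rw [List.length_tail, List.length_tail, Walk.length_support, Walk.length_support,
        hml, hql])
    exact hpermt.nodup_iff.mp hqc.support_nodup
  have hmcyc : m.IsCycle := by
    rw [Walk.isCycle_def, Walk.isTrail_def]
    refine ⟨hperm.nodup_iff.mp hqc.isCircuit.isTrail.edges_nodup, ?_, hmtail_nodup⟩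
    intro h
    rw [h] at hml
    simp at hml
    omega
  exact ⟨x, h₁, m, hmcyc, hml, hvm, by rw [hp]⟩

end Aux4

/-- The number of closed walks of length g+2 that are not cycles, whose
traversed-edge subgraph contains a cycle of length g, and whose base vertex does not
lie on that cycle, equals g·N_g·(c+d−4). -/
theorem lambda_g_two {V : Type*} [Fintype V] [DecidableEq V]
    (G : SimpleGraph V) [DecidableRel G.Adj]
    (U : Set V) (c d : ℕ) (hc : 2 ≤ c) (hd : 2 ≤ d)
    (hbip : ∀ ⦃u v : V⦄, G.Adj u v → (u ∈ U ↔ v ∉ U))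
    (hdegU : ∀ v ∈ U, G.degree v = c)
    (hdegW : ∀ v ∉ U, G.degree v = d)
    (hcyc : ¬ G.IsAcyclic) (g : ℕ) (hg : G.girth = g)
    (N : ℕ → ℕ)
    (hN : ∀ j, {p : Σ v : V, G.Walk v v | p.2.IsCycle ∧ p.2.length = j}.ncard
      = 2 * j * N j) :
    {p : Σ v : V, G.Walk v v | p.2.length = g + 2 ∧ ¬ p.2.IsCycle ∧
        ∃ (u : V) (q : G.Walk u u), q.IsCycle ∧ q.length = g ∧
          (∀ e ∈ q.edges, e ∈ p.2.edges) ∧ p.1 ∉ q.support}.ncard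
      = g * N g * (c + d - 4) := by
  classical
  have hg3 : 3 ≤ g := hg ▸ SimpleGraph.three_le_girth hcyc
  have hmin : ∀ (a : V) (w : G.Walk a a), w.IsCycle → g ≤ w.length := fun a w hw =>
    hg ▸ aux_girth_le hw
  set B : Set (Σ x : V, G.Walk x x) := {p | p.2.IsCycle ∧ p.2.length = g} with hBdef
  set T : Set ((Σ x : V, G.Walk x x) × V) :=
    {t | t.1.2.IsCycle ∧ t.1.2.length = g ∧ G.Adj t.2 t.1.1 ∧ t.2 ∉ t.1.2.support} with hTdef
  set S : Set (Σ v : V, G.Walk v v) := {p : Σ v : V, G.Walk v v | p.2.length = g + 2 ∧ ¬ p.2.IsCycle ∧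
        ∃ (u : V) (q : G.Walk u u), q.IsCycle ∧ q.length = g ∧
          (∀ e ∈ q.edges, e ∈ p.2.edges) ∧ p.1 ∉ q.support} with hSdef
  -- finiteness
  have hBfin : B.Finite := by
    have hsub : B ⊆ ⋃ (x : V), Sigma.mk x '' {q : G.Walk x x | q.length = g} := by
      rintro ⟨x, q⟩ hb
      exact Set.mem_iUnion.mpr ⟨x, ⟨q, hb.2, rfl⟩⟩
    exact Set.Finite.subset
      (Set.finite_iUnion (fun x => Set.Finite.image _ (Set.toFinite _))) hsub
  have hTfin : T.Finite := by
    have hsub : T ⊆ B ×ˢ (Set.univ : Set V) := fun t ht => ⟨⟨ht.1, ht.2.1⟩, trivial⟩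
    exact Set.Finite.subset (hBfin.prod Set.finite_univ) hsub
  haveI : Fintype ↥B := hBfin.fintype
  haveI : Finite ↥T := hTfin
  -- step 1 : |S| = |T|
  have hST : Nat.card ↥S = Nat.card ↥T := by
    apply Nat.card_congr
    apply Equiv.symm
    refine Equiv.ofBijective
      (fun t => ⟨⟨t.1.2, Walk.cons t.2.2.2.1 ((t.1.1.2).concat t.2.2.2.1.symm)⟩,
        aux_f_mem g t.1.1.2 t.2.2.2.1 t.2.1 t.2.2.1 t.2.2.2.2⟩) ⟨?_, ?_⟩
    · rintro ⟨⟨⟨x₁, q₁⟩, v₁⟩, hm₁⟩ ⟨⟨⟨x₂, q₂⟩, v₂⟩, hm₂⟩ h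
      have hval := Subtype.ext_iff.mp h
      dsimp only at hval
      have hv : v₁ = v₂ := congrArg Sigma.fst hval
      subst hv
      obtain ⟨hx, hq⟩ := aux_f_inj q₁ q₂ hm₁.2.2.1 hm₂.2.2.1 hval
      subst hx
      have : q₁ = q₂ := eq_of_heq hq
      subst this
      rfl
    · rintro ⟨⟨v, w⟩, hs⟩
      obtain ⟨hl, hnc, u, q, hqc, hql, hsb, hvq⟩ := hs
      obtain ⟨x, ha, m, hmc, hml, hvm, hw⟩ := aux_surj g hg3 w hl q hqc hql hsb hvq
      refine ⟨⟨⟨⟨x, m⟩, v⟩, ⟨hmc, hml, ha, hvm⟩⟩, Subtype.ext ?_⟩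
      dsimp only
      rw [hw]
  -- step 2 : |T| as a sum over B
  have e2 : ↥T ≃ (Σ b : ↥B, {v' : V // G.Adj v' b.1.1 ∧ v' ∉ b.1.2.support}) :=
    { toFun := fun t => ⟨⟨t.1.1, t.2.1, t.2.2.1⟩, ⟨t.1.2, t.2.2.2.1, t.2.2.2.2⟩⟩
      invFun := fun s => ⟨(s.1.1, s.2.1), s.1.2.1, s.1.2.2, s.2.2.1, s.2.2.2⟩
      left_inv := fun t => rfl
      right_inv := fun s => rfl }
  have hcardT : Nat.card ↥T = ∑ b : ↥B, (G.degree b.1.1 - 2) := by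
    rw [Nat.card_congr e2, Nat.card_eq_fintype_card, Fintype.card_sigma]
    refine Finset.sum_congr rfl (fun b _ => ?_)
    rw [← Nat.card_eq_fintype_card]
    exact aux_fiber_card b.1.2 b.2.1 (fun a w hw => b.2.2 ▸ hmin a w hw)
  -- step 3 : compute the sum
  have hBcard : Fintype.card ↥B = 2 * g * N g := by
    rw [← Nat.card_eq_fintype_card, Nat.card_coe_set_eq]
    exact hN g
  have hn : ∀ (b : ↥B), ¬ b.1.2.Nil := fun b => by
    rw [Walk.nil_iff_length_eq]
    have := b.2.1.three_le_length
    omega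
  let σ : ↥B → ↥B := fun b => ⟨myShift b.1,
    ⟨(aux_shift_mem b.2.1).1, ((aux_shift_mem b.2.1).2.1).trans b.2.2⟩⟩
  have hσinj : Function.Injective σ := by
    intro b₁ b₂ h
    exact Subtype.ext (aux_shift_inj (hn b₁) (hn b₂) (Subtype.ext_iff.mp h))
  let eσ : ↥B ≃ ↥B := Equiv.ofBijective σ (Function.Injective.bijective_of_finite hσinj)
  have hdeg : ∀ b : ↥B, (G.degree ((eσ b).1.1) - 2) + (G.degree b.1.1 - 2) = c + d - 4 := by
    intro b
    have hadj : G.Adj b.1.1 ((eσ b).1.1) := (aux_shift_mem b.2.1).2.2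
    by_cases hU : b.1.1 ∈ U
    · have h1 := hdegU _ hU
      have h2 := hdegW _ ((hbip hadj).mp hU)
      rw [h1, h2]
      omega
    · have h2' : ((eσ b).1.1) ∈ U := by
        by_contra h3
        exact hU ((hbip hadj).mpr h3)
      rw [hdegW _ hU, hdegU _ h2']
      omega
  have hcomp := Equiv.sum_comp eσ (fun b : ↥B => G.degree b.1.1 - 2)
  have hsum : (∑ b : ↥B, ((G.degree ((eσ b).1.1) - 2) + (G.degree b.1.1 - 2)))
      = (2 * g * N g) * (c + d - 4) := by
    rw [Finset.sum_congr rfl (fun b _ => hdeg b), Finset.sum_const, Finset.card_univ,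
      hBcard, smul_eq_mul]
  have hsum2 : (∑ b : ↥B, (G.degree b.1.1 - 2)) + (∑ b : ↥B, (G.degree b.1.1 - 2))
      = (2 * g * N g) * (c + d - 4) := by
    nth_rewrite 1 [← hcomp]
    rw [← Finset.sum_add_distrib]
    exact hsum
  have hX : ∑ b : ↥B, (G.degree b.1.1 - 2) = g * N g * (c + d - 4) := by
    have h2 : (2 * g * N g) * (c + d - 4) = 2 * (g * N g * (c + d - 4)) := by ring
    omega
  calc S.ncard = Nat.card ↥S := (Nat.card_coe_set_eq S).symm
    _ = Nat.card ↥T := hST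
    _ = ∑ b : ↥B, (G.degree b.1.1 - 2) := hcardT
    _ = g * N g * (c + d - 4) := hX
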